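/- Let X be a type, M ≥ 0, and F : ℝ × X → ℝ a function with |F(t, h)| ≤ M for all t > 0 and all h ∈ X. For h ∈ X define Q̃(h) := inf{ liminf_{n→∞} F(t_n, h) : (t_n) ∈ c_0⁺ } (a real number, since all values lie in [−M, M]). Then for every sequence (h_n) in X there exists a sequence (r_n) of positive real numbers with r_n → 0 such that liminf_{n→∞} F(r_n, h_n) ≤ liminf_{n→∞} Q̃(h_n). -/

import Mathlib

open Filter

/-- Diagonal-extraction lemma: with `F` uniformly bounded for positive times and
`Q̃(h) = inf{ liminf_n F(t_n, h) : (t_n) ∈ c_0⁺ }`, for every sequence `(h_n)`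
there is a null sequence `(r_n)` of positive reals with
`liminf_n F(r_n, h_n) ≤ liminf_n Q̃(h_n)`. -/
theorem diagonal_extraction {X : Type*} (M : ℝ) (hM : 0 ≤ M)
    (F : ℝ × X → ℝ)
    (hbd : ∀ (t : ℝ), 0 < t → ∀ h : X, |F (t, h)| ≤ M)
    (hn : ℕ → X) :
    ∃ r : ℕ → ℝ, (∀ n, 0 < r n) ∧ Tendsto r atTop (nhds 0) ∧
      liminf (fun n => F (r n, hn n)) atTop ≤
        liminf (fun n =>
          sInf {q : ℝ | ∃ t : ℕ → ℝ,
            (∀ m, 0 < t m) ∧ Tendsto t atTop (nhds 0) ∧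
            q = liminf (fun m => F (t m, hn n)) atTop}) atTop := by
  classical
  set S : ℕ → Set ℝ := fun n => {q : ℝ | ∃ t : ℕ → ℝ,
      (∀ m, 0 < t m) ∧ Tendsto t atTop (nhds 0) ∧
      q = liminf (fun m => F (t m, hn n)) atTop} with hS
  set Q : ℕ → ℝ := fun n => sInf (S n) with hQdef
  -- bounds on F for positive times
  have hFub : ∀ {t : ℝ}, 0 < t → ∀ n, F (t, hn n) ≤ M := fun ht n =>
    (abs_le.mp (hbd _ ht _)).2
  have hFlb : ∀ {t : ℝ}, 0 < t → ∀ n, -M ≤ F (t, hn n) := fun ht n =>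
    (abs_le.mp (hbd _ ht _)).1
  -- the sample sequence 1/(m+1)
  have hsamp_pos : ∀ m : ℕ, (0:ℝ) < 1 / (m + 1) := fun m => by positivity
  have hsamp_tend : Tendsto (fun m : ℕ => 1 / ((m:ℝ) + 1)) atTop (nhds 0) :=
    tendsto_one_div_add_atTop_nhds_zero_nat
  have hSne : ∀ n, (S n).Nonempty := fun n =>
    ⟨liminf (fun m : ℕ => F (1 / ((m:ℝ) + 1), hn n)) atTop,
      ⟨fun m : ℕ => 1 / ((m:ℝ) + 1), hsamp_pos, hsamp_tend, rfl⟩⟩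
  -- every element of S n lies in [-M, M]
  have hSlb : ∀ n, ∀ q ∈ S n, -M ≤ q := by
    rintro n q ⟨t, htp, -, rfl⟩
    refine le_liminf_of_le ?_ (Eventually.of_forall fun m => hFlb (htp m) n)
    exact IsBoundedUnder.isCoboundedUnder_ge
      (isBoundedUnder_of ⟨M, fun m => hFub (htp m) n⟩)
  have hSbdd : ∀ n, BddBelow (S n) := fun n => ⟨-M, fun q hq => hSlb n q hq⟩
  have hQlb : ∀ n, -M ≤ Q n := fun n => le_csInf (hSne n) (hSlb n)
  have hQub : ∀ n, Q n ≤ M := by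
    intro n
    obtain ⟨q, ⟨t, htp, htt, rfl⟩⟩ := hSne n
    refine le_trans (csInf_le (hSbdd n) ⟨t, htp, htt, rfl⟩) ?_
    refine liminf_le_of_le (isBoundedUnder_of ⟨-M, fun m => hFlb (htp m) n⟩) ?_
    intro b hb
    obtain ⟨m, hm⟩ := hb.exists
    exact hm.trans (hFub (htp m) n)
  -- choose for each n a good r n
  have key : ∀ n : ℕ, ∃ ρ : ℝ, 0 < ρ ∧ ρ < 1 / (n + 1) ∧
      F (ρ, hn n) < Q n + 2 / (n + 1) := by
    intro n
    have h1 : Q n < Q n + 1 / (n + 1) := by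
      have := hsamp_pos n; linarith
    obtain ⟨q, hqS, hqlt⟩ := exists_lt_of_csInf_lt (hSne n) h1
    obtain ⟨t, htp, htt, rfl⟩ := hqS
    have hco : IsCoboundedUnder (· ≥ ·) atTop (fun m => F (t m, hn n)) :=
      IsBoundedUnder.isCoboundedUnder_ge
        (isBoundedUnder_of ⟨M, fun m => hFub (htp m) n⟩)
    have hfreq : ∃ᶠ m in atTop, F (t m, hn n) < Q n + 2 / (n + 1) := by
      refine frequently_lt_of_liminf_lt hco ?_
      have := hsamp_pos n
      calc liminf (fun m => F (t m, hn n)) atTop < Q n + 1 / (n + 1) := hqlt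
        _ ≤ Q n + 2 / (n + 1) := by
            have h12 : (1:ℝ) / (n + 1) ≤ 2 / (n + 1) := by
              gcongr
              norm_num
            linarith
    have hev : ∀ᶠ m in atTop, t m < 1 / (n + 1) :=
      htt.eventually (gt_mem_nhds (hsamp_pos n))
    obtain ⟨m, hm1, hm2⟩ := (hfreq.and_eventually hev).exists
    exact ⟨t m, htp m, hm2, hm1⟩
  choose r hrpos hrlt hrF using key
  refine ⟨r, hrpos, ?_, ?_⟩
  · exact squeeze_zero (fun n => (hrpos n).le) (fun n => (hrlt n).le) hsamp_tend
  · -- liminf F(r n, hn n) ≤ liminf Q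
    refine le_of_forall_pos_le_add fun ε hε => ?_
    have hev : ∀ᶠ n in atTop, F (r n, hn n) ≤ Q n + ε := by
      have h2 : Tendsto (fun n : ℕ => 2 / ((n:ℝ) + 1)) atTop (nhds 0) := by
        simpa [div_eq_mul_inv] using hsamp_tend.const_mul 2
      filter_upwards [h2.eventually (gt_mem_nhds hε)] with n h2n
      have := hrF n
      linarith
    have hQbdd_below : IsBoundedUnder (· ≥ ·) atTop Q :=
      isBoundedUnder_of ⟨-M, hQlb⟩
    have hQcobdd : IsCoboundedUnder (· ≥ ·) atTop Q :=
      IsBoundedUnder.isCoboundedUnder_ge (isBoundedUnder_of ⟨M, hQub⟩)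
    have hQεcobdd : IsCoboundedUnder (· ≥ ·) atTop (fun n => Q n + ε) :=
      IsBoundedUnder.isCoboundedUnder_ge
        (isBoundedUnder_of ⟨M + ε, fun n => by have := hQub n; linarith⟩)
    have hstep : liminf (fun n => F (r n, hn n)) atTop ≤
        liminf (fun n => Q n + ε) atTop :=
      liminf_le_liminf hev
        (isBoundedUnder_of ⟨-M, fun n => hFlb (hrpos n) n⟩) hQεcobdd
    rwa [liminf_add_const atTop Q ε hQcobdd hQbdd_below] at hstep
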